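/- For every word-representable graph G, l(G □ K₂) ≤ 2·l(G) + 3·|V(G)| − 2, where l denotes the minimum length of a word-representant. -/

import Mathlib

open SimpleGraph

variable {V : Type*}

/-- Two distinct letters `x` and `y` alternate in a word `w` if the subsequence of `w`
consisting of all occurrences of `x` and `y` is strictly alternating. -/
def Alternates [DecidableEq V] (x y : V) (w : List V) : Prop :=
  (w.filter (fun z => decide (z = x ∨ z = y))).Chain' (· ≠ ·)

/-- A word `w` represents the graph `G` if it contains every vertex at least once and
two distinct vertices are adjacent iff they alternate in `w`. -/
def Represents [DecidableEq V] (G : SimpleGraph V) (w : List V) : Prop :=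
  (∀ v : V, v ∈ w) ∧ ∀ x y : V, x ≠ y → (G.Adj x y ↔ Alternates x y w)

/-- A graph is word-representable if some word represents it. -/
def WordRepresentable [DecidableEq V] (G : SimpleGraph V) : Prop :=
  ∃ w : List V, Represents G w

/-- `l(G)`: the minimum length of a word-representant of `G`. -/
noncomputable def reprLen [DecidableEq V] (G : SimpleGraph V) : ℕ :=
  sInf {n | ∃ w : List V, Represents G w ∧ w.length = n}

/-! ### Auxiliary list lemmas -/

section Aux
variable {α β : Type*}

private lemma filter_flatMap' (l : List α) (g : α → List β) (p : β → Bool) :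
    (l.flatMap g).filter p = l.flatMap (fun a => (g a).filter p) := by
  induction l with
  | nil => rfl
  | cons a l ih => simp [List.flatMap_cons, List.filter_append, ih]

private lemma flatMap_eq_map_filter' (l : List α) (g : α → List β) (q : α → Bool) (φ : α → β)
    (hg : ∀ c, g c = if q c then [φ c] else []) :
    l.flatMap g = (l.filter q).map φ := by
  induction l with
  | nil => rfl
  | cons a l ih =>
    rw [List.flatMap_cons, ih, List.filter_cons, hg a]
    by_cases h : q a <;> simp [h]

private lemma flatMap_eq_filter_flatMap' (l : List α) (g : α → List β) (q : α → Bool)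
    (L : List β) (hg : ∀ c, g c = if q c then L else []) :
    l.flatMap g = (l.filter q).flatMap (fun _ => L) := by
  induction l with
  | nil => rfl
  | cons a l ih =>
    rw [List.flatMap_cons, ih, List.filter_cons, hg a]
    by_cases h : q a <;> simp [h, List.flatMap_cons]

private lemma length_flatMap_two (l : List α) (f g : α → β) :
    (l.flatMap (fun c => [f c, g c])).length = 2 * l.length := by
  induction l with
  | nil => rfl
  | cons a l ih => simp [List.flatMap_cons, ih]; omega

private lemma getLast?_cons_of_ne_nil {a : α} {l : List α} (h : l ≠ []) :
    (a :: l).getLast? = l.getLast? := by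
  cases l with
  | nil => exact absurd rfl h
  | cons b t => rw [List.getLast?_cons_cons]

private lemma getLast?_filter_dedup [DecidableEq α] (p : α → Bool) (w : List α) :
    (w.dedup.filter p).getLast? = (w.filter p).getLast? := by
  induction w with
  | nil => rfl
  | cons a w ih =>
    by_cases ha : a ∈ w
    · rw [List.dedup_cons_of_mem ha, List.filter_cons]
      by_cases hp : p a
      · have hmem : a ∈ w.filter p := List.mem_filter.mpr ⟨ha, hp⟩
        have hne : w.filter p ≠ [] := List.ne_nil_of_mem hmem
        rw [if_pos hp, getLast?_cons_of_ne_nil hne, ih]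
      · rw [if_neg hp, ih]
    · rw [List.dedup_cons_of_notMem ha, List.filter_cons, List.filter_cons]
      by_cases hp : p a
      · rw [if_pos hp, if_pos hp]
        by_cases hfe : w.filter p = []
        · have hde : w.dedup.filter p = [] := by
            rw [List.filter_eq_nil_iff] at *
            intro c hc
            exact hfe c (List.mem_dedup.mp hc)
          rw [hde, hfe]
        · have hde : w.dedup.filter p ≠ [] := by
            intro h0
            apply hfe
            rw [List.filter_eq_nil_iff] at *
            intro c hc
            exact h0 c (List.mem_dedup.mpr hc)
          rw [getLast?_cons_of_ne_nil hde, getLast?_cons_of_ne_nil hfe, ih]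
      · rw [if_neg hp, if_neg hp, ih]

private lemma eq_pair_of_nodup {l : List α} {x y : α} (hxy : x ≠ y)
    (hnd : l.Nodup) (hmem : ∀ c, c ∈ l ↔ c = x ∨ c = y) :
    l = [x, y] ∨ l = [y, x] := by
  match l with
  | [] => exact absurd ((hmem x).mpr (Or.inl rfl)) List.not_mem_nil
  | [a] =>
    have hx : x = a := by simpa using (hmem x).mpr (Or.inl rfl)
    have hy : y = a := by simpa using (hmem y).mpr (Or.inr rfl)
    exact absurd (hx.trans hy.symm) hxy
  | [a, b] =>
    have ha : a = x ∨ a = y := (hmem a).mp (by simp)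
    have hb : b = x ∨ b = y := (hmem b).mp (by simp)
    have hab : a ≠ b := by
      rcases List.nodup_cons.mp hnd with ⟨h1, -⟩
      simpa using h1
    rcases ha with rfl | rfl
    · rcases hb with rfl | rfl
      · exact absurd rfl hab
      · exact Or.inl rfl
    · rcases hb with rfl | rfl
      · exact Or.inr rfl
      · exact absurd rfl hab
  | a :: b :: c :: t =>
    have ha : a = x ∨ a = y := (hmem a).mp (by simp)
    have hb : b = x ∨ b = y := (hmem b).mp (by simp)
    have hc : c = x ∨ c = y := (hmem c).mp (by simp)
    have h1 : a ≠ b := by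
      rcases List.nodup_cons.mp hnd with ⟨hn, -⟩
      intro e; exact hn (by simp [e])
    have h2 : a ≠ c := by
      rcases List.nodup_cons.mp hnd with ⟨hn, -⟩
      intro e; exact hn (by simp [e])
    have h3 : b ≠ c := by
      rcases List.nodup_cons.mp hnd with ⟨-, hn2⟩
      rcases List.nodup_cons.mp hn2 with ⟨hn, -⟩
      intro e; exact hn (by simp [e])
    rcases ha with rfl | rfl <;> rcases hb with h | h <;> rcases hc with h' | h' <;>
      simp_all

private lemma filter_eq_single_of_nodup [DecidableEq α] {l : List α} (hnd : l.Nodup) {x : α}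
    (hx : x ∈ l) : l.filter (fun c => decide (c = x)) = [x] := by
  induction l with
  | nil => cases hx
  | cons a t ih =>
    rcases List.nodup_cons.mp hnd with ⟨hna, hnt⟩
    rw [List.filter_cons]
    by_cases hax : a = x
    · subst hax
      have h0 : t.filter (fun c => decide (c = a)) = [] := by
        rw [List.filter_eq_nil_iff]
        intro c hc hdec
        rw [decide_eq_true_iff] at hdec
        exact hna (hdec ▸ hc)
      simp [h0]
    · have hxt : x ∈ t := by
        rcases List.mem_cons.mp hx with h | h
        · exact absurd h.symm hax
        · exact h
      simp [hax, ih hnt hxt]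

private lemma chain_append_iff {a b : α} (hab : a ≠ b) {f t : List α}
    (hfl : f.getLast? = some b) (htc : t.Chain' (· ≠ ·)) (hth : t.head? = some a) :
    (f ++ t).Chain' (· ≠ ·) ↔ f.Chain' (· ≠ ·) := by
  simp only [List.Chain']
  rw [List.isChain_append]
  constructor
  · exact fun h => h.1
  · intro hf
    refine ⟨hf, htc, ?_⟩
    intro p hp q hq
    rw [hfl] at hp; rw [hth] at hq
    simp only [Option.mem_def, Option.some.injEq] at hp hq
    subst hp; subst hq
    exact fun e => hab e.symm

private lemma chain_map_iff (φ : α → β) (hφ : Function.Injective φ) (l : List α) :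
    (l.map φ).Chain' (· ≠ ·) ↔ l.Chain' (· ≠ ·) := by
  simp only [List.Chain']
  rw [List.isChain_map]
  constructor <;> intro h
  · exact h.imp (fun c d hne e => hne (by rw [e]))
  · exact h.imp (fun c d hne e => hne (hφ e))

private lemma chainB {p q : β} (hpq : p ≠ q) (m : List α) :
    (p :: m.flatMap (fun _ => [q, p])).Chain' (· ≠ ·) := by
  induction m with
  | nil => exact List.isChain_singleton _
  | cons c m ih =>
    rw [List.flatMap_cons]
    show (p :: q :: p :: m.flatMap (fun _ => [q, p])).Chain' (· ≠ ·)
    simp only [List.Chain']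
    rw [List.isChain_cons_cons, List.isChain_cons_cons]
    exact ⟨hpq, hpq.symm, ih⟩

private lemma chainA {p q : β} (hpq : p ≠ q) {L : List β} (hL : L.Chain' (· ≠ ·))
    (hhead : L.head? = some p) (m : List α) :
    (m.flatMap (fun _ => [p, q]) ++ L).Chain' (· ≠ ·) := by
  induction m with
  | nil => simpa
  | cons c m ih =>
    have hh : (m.flatMap (fun _ => [p, q]) ++ L).head? = some p := by
      cases m with
      | nil => simpa
      | cons d m => rw [List.flatMap_cons]; rfl
    rw [List.flatMap_cons]
    show (p :: q :: (m.flatMap (fun _ => [p, q]) ++ L)).Chain' (· ≠ ·)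
    simp only [List.Chain']
    rw [List.isChain_cons_cons, List.isChain_cons]
    refine ⟨hpq, ?_, ih⟩
    intro z hz
    rw [hh] at hz
    simp only [Option.mem_def, Option.some.injEq] at hz
    subst hz
    exact hpq.symm

end Aux

/-! ### The prism word construction -/

/-- The word representing the prism `G □ K₂` built from a representant `w` of `G`. -/
private def prismWord [DecidableEq V] (w : List V) : List (V × Fin 2) :=
  w.flatMap (fun c => [(c, 1), (c, 0)]) ++ w.dedup.map (fun c => (c, 1))
    ++ w.dedup.dropLast.flatMap (fun c => [(c, 0), (c, 1)])

section Prism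
variable [DecidableEq V]

private lemma filterA (w : List V) (x : V) (p : V × Fin 2 → Bool)
    (hp : ∀ c l, p (c, l) = decide (c = x)) :
    (prismWord w).filter p =
      (w.filter (fun c => decide (c = x))).flatMap (fun _ => [(x, (1 : Fin 2)), (x, 0)])
      ++ ((w.dedup.filter (fun c => decide (c = x))).map (fun c => (c, (1 : Fin 2)))
        ++ (w.dedup.dropLast.filter (fun c => decide (c = x))).flatMap
            (fun _ => [(x, (0 : Fin 2)), (x, 1)])) := by
  have h1 : (w.flatMap (fun c => [(c, (1 : Fin 2)), (c, 0)])).filter p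
      = (w.filter (fun c => decide (c = x))).flatMap (fun _ => [(x, (1 : Fin 2)), (x, 0)]) := by
    rw [filter_flatMap']
    apply flatMap_eq_filter_flatMap'
    intro c
    by_cases hc : c = x
    · subst hc; simp [hp]
    · simp [hp, hc]
  have h2 : (w.dedup.map (fun c => (c, (1 : Fin 2)))).filter p
      = (w.dedup.filter (fun c => decide (c = x))).map (fun c => (c, (1 : Fin 2))) := by
    rw [List.filter_map]
    congr 1
    apply List.filter_congr
    intro c _
    simpa [Function.comp] using hp c 1
  have h3 : (w.dedup.dropLast.flatMap (fun c => [(c, (0 : Fin 2)), (c, 1)])).filter p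
      = (w.dedup.dropLast.filter (fun c => decide (c = x))).flatMap
          (fun _ => [(x, (0 : Fin 2)), (x, 1)]) := by
    rw [filter_flatMap']
    apply flatMap_eq_filter_flatMap'
    intro c
    by_cases hc : c = x
    · subst hc; simp [hp]
    · simp [hp, hc]
  rw [prismWord, List.filter_append, List.filter_append, h1, h2, h3, List.append_assoc]

private lemma filterL0 (w : List V) (x y : V) (p : V × Fin 2 → Bool)
    (hp0 : ∀ c, p (c, 0) = decide (c = x ∨ c = y)) (hp1 : ∀ c, p (c, 1) = false) :
    (prismWord w).filter p =
      ((w.filter (fun c => decide (c = x ∨ c = y))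
        ++ w.dedup.dropLast.filter (fun c => decide (c = x ∨ c = y))).map
          (fun c => (c, (0 : Fin 2)))) := by
  have h1 : (w.flatMap (fun c => [(c, (1 : Fin 2)), (c, 0)])).filter p
      = (w.filter (fun c => decide (c = x ∨ c = y))).map (fun c => (c, (0 : Fin 2))) := by
    rw [filter_flatMap']
    apply flatMap_eq_map_filter'
    intro c
    by_cases hc : c = x ∨ c = y <;> simp [hp0, hp1, hc]
  have h2 : (w.dedup.map (fun c => (c, (1 : Fin 2)))).filter p = [] := by
    rw [List.filter_map]
    have : (w.dedup.filter (p ∘ fun c => (c, (1 : Fin 2)))) = [] := by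
      rw [List.filter_eq_nil_iff]
      intro c _ hc
      rw [Function.comp_apply, hp1] at hc
      exact Bool.false_ne_true hc
    rw [this, List.map_nil]
  have h3 : (w.dedup.dropLast.flatMap (fun c => [(c, (0 : Fin 2)), (c, 1)])).filter p
      = (w.dedup.dropLast.filter (fun c => decide (c = x ∨ c = y))).map
          (fun c => (c, (0 : Fin 2))) := by
    rw [filter_flatMap']
    apply flatMap_eq_map_filter'
    intro c
    by_cases hc : c = x ∨ c = y <;> simp [hp0, hp1, hc]
  rw [prismWord, List.filter_append, List.filter_append, h1, h2, h3, List.map_append,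
    List.append_nil]

private lemma filterL1 (w : List V) (x y : V) (p : V × Fin 2 → Bool)
    (hp0 : ∀ c, p (c, 0) = false) (hp1 : ∀ c, p (c, 1) = decide (c = x ∨ c = y)) :
    (prismWord w).filter p =
      ((w.filter (fun c => decide (c = x ∨ c = y))
        ++ (w.dedup.filter (fun c => decide (c = x ∨ c = y))
          ++ w.dedup.dropLast.filter (fun c => decide (c = x ∨ c = y)))).map
          (fun c => (c, (1 : Fin 2)))) := by
  have h1 : (w.flatMap (fun c => [(c, (1 : Fin 2)), (c, 0)])).filter p
      = (w.filter (fun c => decide (c = x ∨ c = y))).map (fun c => (c, (1 : Fin 2))) := by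
    rw [filter_flatMap']
    apply flatMap_eq_map_filter'
    intro c
    by_cases hc : c = x ∨ c = y <;> simp [hp0, hp1, hc]
  have h2 : (w.dedup.map (fun c => (c, (1 : Fin 2)))).filter p
      = (w.dedup.filter (fun c => decide (c = x ∨ c = y))).map (fun c => (c, (1 : Fin 2))) := by
    rw [List.filter_map]
    congr 1
    apply List.filter_congr
    intro c _
    simpa [Function.comp] using hp1 c
  have h3 : (w.dedup.dropLast.flatMap (fun c => [(c, (0 : Fin 2)), (c, 1)])).filter p
      = (w.dedup.dropLast.filter (fun c => decide (c = x ∨ c = y))).map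
          (fun c => (c, (1 : Fin 2))) := by
    rw [filter_flatMap']
    apply flatMap_eq_map_filter'
    intro c
    by_cases hc : c = x ∨ c = y <;> simp [hp0, hp1, hc]
  rw [prismWord, List.filter_append, List.filter_append, h1, h2, h3, List.map_append,
    List.map_append, List.append_assoc]

private lemma filterCross (w : List V) (x y : V) (hxy : x ≠ y) (p : V × Fin 2 → Bool)
    (hp0 : ∀ c, p (c, 0) = decide (c = x)) (hp1 : ∀ c, p (c, 1) = decide (c = y)) :
    (prismWord w).filter p =
      (w.filter (fun c => decide (c = x ∨ c = y))).map
          (fun c => (c, if c = x then (0 : Fin 2) else 1))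
      ++ ((w.dedup.filter (fun c => decide (c = y))).map (fun c => (c, (1 : Fin 2)))
        ++ (w.dedup.dropLast.filter (fun c => decide (c = x ∨ c = y))).map
            (fun c => (c, if c = x then (0 : Fin 2) else 1))) := by
  have key : ∀ c : V, [(c, (1 : Fin 2)), (c, 0)].filter p
      = if decide (c = x ∨ c = y) then [(c, if c = x then (0 : Fin 2) else 1)] else [] := by
    intro c
    by_cases hcx : c = x
    · subst hcx
      simp [hp0, hp1, hxy]
    · by_cases hcy : c = y
      · subst hcy
        simp [hp0, hp1, hcx]
      · simp [hp0, hp1, hcx, hcy]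
  have key2 : ∀ c : V, [(c, (0 : Fin 2)), (c, 1)].filter p
      = if decide (c = x ∨ c = y) then [(c, if c = x then (0 : Fin 2) else 1)] else [] := by
    intro c
    by_cases hcx : c = x
    · subst hcx
      simp [hp0, hp1, hxy]
    · by_cases hcy : c = y
      · subst hcy
        simp [hp0, hp1, hcx]
      · simp [hp0, hp1, hcx, hcy]
  have h1 : (w.flatMap (fun c => [(c, (1 : Fin 2)), (c, 0)])).filter p
      = (w.filter (fun c => decide (c = x ∨ c = y))).map
          (fun c => (c, if c = x then (0 : Fin 2) else 1)) := by
    rw [filter_flatMap']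
    exact flatMap_eq_map_filter' _ _ _ _ key
  have h2 : (w.dedup.map (fun c => (c, (1 : Fin 2)))).filter p
      = (w.dedup.filter (fun c => decide (c = y))).map (fun c => (c, (1 : Fin 2))) := by
    rw [List.filter_map]
    congr 1
    apply List.filter_congr
    intro c _
    simpa [Function.comp] using hp1 c
  have h3 : (w.dedup.dropLast.flatMap (fun c => [(c, (0 : Fin 2)), (c, 1)])).filter p
      = (w.dedup.dropLast.filter (fun c => decide (c = x ∨ c = y))).map
          (fun c => (c, if c = x then (0 : Fin 2) else 1)) := by
    rw [filter_flatMap']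
    exact flatMap_eq_map_filter' _ _ _ _ key2
  rw [prismWord, List.filter_append, List.filter_append, h1, h2, h3, List.append_assoc]

end Prism

section Pairs
variable [DecidableEq V]

private lemma pair_data {w : List V} {x y : V} (hxy : x ≠ y) (hx : x ∈ w) (hy : y ∈ w) :
    ∃ a b : V, a ≠ b ∧ ((a = x ∧ b = y) ∨ (a = y ∧ b = x)) ∧
      w.dedup.filter (fun c => decide (c = x ∨ c = y)) = [a, b] ∧
      (w.filter (fun c => decide (c = x ∨ c = y))).getLast? = some b := by
  have hnd : (w.dedup.filter (fun c => decide (c = x ∨ c = y))).Nodup :=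
    (List.nodup_dedup w).filter _
  have hmem : ∀ c, c ∈ w.dedup.filter (fun c => decide (c = x ∨ c = y)) ↔ c = x ∨ c = y := by
    intro c
    rw [List.mem_filter, List.mem_dedup]
    constructor
    · rintro ⟨-, hc⟩
      exact of_decide_eq_true hc
    · rintro (rfl | rfl) <;> simp [hx, hy]
  rcases eq_pair_of_nodup hxy hnd hmem with hcase | hcase
  · refine ⟨x, y, hxy, Or.inl ⟨rfl, rfl⟩, hcase, ?_⟩
    rw [← getLast?_filter_dedup, hcase]
    rfl
  · refine ⟨y, x, Ne.symm hxy, Or.inr ⟨rfl, rfl⟩, hcase, ?_⟩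
    rw [← getLast?_filter_dedup, hcase]
    rfl

private lemma drop_data {w : List V} {x y a b : V}
    (hd : w.dedup.filter (fun c => decide (c = x ∨ c = y)) = [a, b]) :
    w.dedup.dropLast.filter (fun c => decide (c = x ∨ c = y)) = [a] ∨
      w.dedup.dropLast.filter (fun c => decide (c = x ∨ c = y)) = [a, b] := by
  have hne : w.dedup ≠ [] := by
    intro h0
    rw [h0] at hd
    simp at hd
  have hsplit : w.dedup.dropLast ++ [w.dedup.getLast hne] = w.dedup :=
    List.dropLast_append_getLast hne
  set u := w.dedup.getLast hne with hu
  have hcat : w.dedup.dropLast.filter (fun c => decide (c = x ∨ c = y))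
      ++ [u].filter (fun c => decide (c = x ∨ c = y)) = [a, b] := by
    rw [← List.filter_append, hsplit, hd]
  by_cases hqu : (u = x ∨ u = y)
  · have hu1 : [u].filter (fun c => decide (c = x ∨ c = y)) = [u] := by simp [hqu]
    rw [hu1] at hcat
    rcases hlist : w.dedup.dropLast.filter (fun c => decide (c = x ∨ c = y)) with
      - | ⟨c, - | ⟨e, t'⟩⟩
    · rw [hlist] at hcat
      simp at hcat
    · rw [hlist] at hcat
      simp only [List.cons_append, List.nil_append, List.cons.injEq] at hcat
      left
      rw [hcat.1]
    · rw [hlist] at hcat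
      simp only [List.cons_append, List.cons.injEq] at hcat
      exfalso
      exact List.append_ne_nil_of_right_ne_nil t' (by simp) hcat.2.2
  · have hu1 : [u].filter (fun c => decide (c = x ∨ c = y)) = [] := by simp [hqu]
    rw [hu1, List.append_nil] at hcat
    right
    exact hcat

end Pairs

section Cases
variable [DecidableEq V]

private lemma same_letter_alt (w : List V) (x : V) (hx : x ∈ w) {i j : Fin 2} (hij : i ≠ j) :
    Alternates (x, i) (x, j) (prismWord w) := by
  have hne10 : ((x, (1 : Fin 2)) : V × Fin 2) ≠ (x, 0) :=
    fun h => absurd (show (1 : Fin 2) = 0 from congrArg Prod.snd h) (by decide)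
  have hne01 : ((x, (0 : Fin 2)) : V × Fin 2) ≠ (x, 1) :=
    fun h => absurd (show (0 : Fin 2) = 1 from congrArg Prod.snd h) (by decide)
  have hp : ∀ c l, (fun z => decide (z = (x, i) ∨ z = (x, j))) (c, l) = decide (c = x) := by
    intro c l
    apply decide_eq_decide.mpr
    constructor
    · rintro (h | h) <;> exact congrArg Prod.fst h
    · rintro rfl
      have hl : l = i ∨ l = j := by
        fin_cases i <;> fin_cases j <;> fin_cases l <;> simp_all
      rcases hl with rfl | rfl
      · exact Or.inl rfl
      · exact Or.inr rfl
  unfold Alternates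
  rw [filterA w x _ hp,
    filter_eq_single_of_nodup (List.nodup_dedup w) (List.mem_dedup.mpr hx)]
  simp only [List.map_cons, List.map_nil, List.singleton_append]
  exact chainA hne10 (chainB hne10 _) rfl _

private lemma level0_alt (w : List V) (x y : V) (hxy : x ≠ y) (hx : x ∈ w) (hy : y ∈ w) :
    Alternates (x, (0 : Fin 2)) (y, 0) (prismWord w) ↔ Alternates x y w := by
  obtain ⟨a, b, hab, hset, hd, hfl⟩ := pair_data hxy hx hy
  have ht := drop_data hd
  have hp0 : ∀ c, (fun z => decide (z = ((x : V), (0 : Fin 2)) ∨ z = (y, 0))) (c, 0)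
      = decide (c = x ∨ c = y) := by
    intro c
    apply decide_eq_decide.mpr
    constructor
    · rintro (h | h)
      · exact Or.inl (congrArg Prod.fst h)
      · exact Or.inr (congrArg Prod.fst h)
    · rintro (rfl | rfl)
      · exact Or.inl rfl
      · exact Or.inr rfl
  have hp1 : ∀ c, (fun z => decide (z = ((x : V), (0 : Fin 2)) ∨ z = (y, 0))) (c, 1) = false := by
    intro c
    apply decide_eq_false
    rintro (h | h) <;>
      exact absurd (show (1 : Fin 2) = 0 from congrArg Prod.snd h) (by decide)
  unfold Alternates
  rw [filterL0 w x y _ hp0 hp1,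
    chain_map_iff _ (fun c d h => congrArg Prod.fst h)]
  have htc : (w.dedup.dropLast.filter (fun c => decide (c = x ∨ c = y))).Chain' (· ≠ ·) := by
    rcases ht with h | h <;> rw [h]
    · exact List.isChain_singleton _
    · exact List.isChain_pair.mpr hab
  have hth : (w.dedup.dropLast.filter (fun c => decide (c = x ∨ c = y))).head? = some a := by
    rcases ht with h | h <;> rw [h] <;> rfl
  exact chain_append_iff hab hfl htc hth

private lemma level1_alt (w : List V) (x y : V) (hxy : x ≠ y) (hx : x ∈ w) (hy : y ∈ w) :
    Alternates (x, (1 : Fin 2)) (y, 1) (prismWord w) ↔ Alternates x y w := by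
  obtain ⟨a, b, hab, hset, hd, hfl⟩ := pair_data hxy hx hy
  have ht := drop_data hd
  have hp1 : ∀ c, (fun z => decide (z = ((x : V), (1 : Fin 2)) ∨ z = (y, 1))) (c, 1)
      = decide (c = x ∨ c = y) := by
    intro c
    apply decide_eq_decide.mpr
    constructor
    · rintro (h | h)
      · exact Or.inl (congrArg Prod.fst h)
      · exact Or.inr (congrArg Prod.fst h)
    · rintro (rfl | rfl)
      · exact Or.inl rfl
      · exact Or.inr rfl
  have hp0 : ∀ c, (fun z => decide (z = ((x : V), (1 : Fin 2)) ∨ z = (y, 1))) (c, 0) = false := by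
    intro c
    apply decide_eq_false
    rintro (h | h) <;>
      exact absurd (show (0 : Fin 2) = 1 from congrArg Prod.snd h) (by decide)
  unfold Alternates
  rw [filterL1 w x y _ hp0 hp1,
    chain_map_iff _ (fun c d h => congrArg Prod.fst h), hd]
  have htc : ([a, b] ++ w.dedup.dropLast.filter (fun c => decide (c = x ∨ c = y))).Chain'
      (· ≠ ·) := by
    rcases ht with h | h <;> rw [h]
    · exact List.isChain_cons_cons.mpr ⟨hab, List.isChain_pair.mpr hab.symm⟩
    · exact List.isChain_cons_cons.mpr ⟨hab,
        List.isChain_cons_cons.mpr ⟨hab.symm, List.isChain_pair.mpr hab⟩⟩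
  have hth : (([a, b] ++ w.dedup.dropLast.filter (fun c => decide (c = x ∨ c = y)))).head?
      = some a := rfl
  exact chain_append_iff hab hfl htc hth

private lemma cross_not_alt (w : List V) (x y : V) (hxy : x ≠ y) (hx : x ∈ w) (hy : y ∈ w) :
    ¬ Alternates (x, (0 : Fin 2)) (y, 1) (prismWord w) := by
  obtain ⟨a, b, hab, hset, hd, hfl⟩ := pair_data hxy hx hy
  have ht := drop_data hd
  have hp0 : ∀ c, (fun z => decide (z = ((x : V), (0 : Fin 2)) ∨ z = (y, 1))) (c, 0)
      = decide (c = x) := by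
    intro c
    apply decide_eq_decide.mpr
    constructor
    · rintro (h | h)
      · exact congrArg Prod.fst h
      · exact absurd (show (0 : Fin 2) = 1 from congrArg Prod.snd h) (by decide)
    · rintro rfl
      exact Or.inl rfl
  have hp1 : ∀ c, (fun z => decide (z = ((x : V), (0 : Fin 2)) ∨ z = (y, 1))) (c, 1)
      = decide (c = y) := by
    intro c
    apply decide_eq_decide.mpr
    constructor
    · rintro (h | h)
      · exact absurd (show (1 : Fin 2) = 0 from congrArg Prod.snd h) (by decide)
      · exact congrArg Prod.fst h
    · rintro rfl
      exact Or.inr rfl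
  have hφy : (fun c => ((c : V), if c = x then (0 : Fin 2) else 1)) y = (y, 1) := by
    simp [Ne.symm hxy]
  unfold Alternates
  rw [filterCross w x y hxy _ hp0 hp1,
    filter_eq_single_of_nodup (List.nodup_dedup w) (List.mem_dedup.mpr hy)]
  simp only [List.map_cons, List.map_nil]
  rcases hset with ⟨ha, hb⟩ | ⟨ha, hb⟩
  · -- a = x, b = y : the last letter of the pair-filter of w is y
    subst ha; subst hb
    intro hch
    have hlast : ((w.filter (fun c => decide (c = a ∨ c = b))).map
        (fun c => ((c : V), if c = a then (0 : Fin 2) else 1))).getLast? = some (b, 1) := by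
      rw [List.getLast?_map, hfl]
      simp [Ne.symm hab]
    have h2 := (List.isChain_append.mp hch).2.2
    exact h2 (b, 1) (by rw [hlast]; rfl) (b, 1) rfl rfl
  · -- a = y, b = x : the dropLast-filter starts with y giving a double (y,1)
    subst ha; subst hb
    have htail : ∃ rest, ([((a : V), (1 : Fin 2))]
        ++ (w.dedup.dropLast.filter (fun c => decide (c = b ∨ c = a))).map
            (fun c => ((c : V), if c = b then (0 : Fin 2) else 1)))
        = (a, 1) :: (a, 1) :: rest := by
      rcases ht with h | h <;> rw [h]
      · exact ⟨[], by simp [Ne.symm hxy]⟩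
      · exact ⟨[((b : V), (0 : Fin 2))], by simp [Ne.symm hxy]⟩
    obtain ⟨rest, hrest⟩ := htail
    intro hch
    rw [hrest] at hch
    have h2 := (List.isChain_append.mp hch).2.1
    exact (List.isChain_cons_cons.mp h2).1 rfl

private lemma alternates_symm {α : Type*} [DecidableEq α] (x y : α) (w : List α) :
    Alternates x y w ↔ Alternates y x w := by
  unfold Alternates
  rw [List.filter_congr (fun z _ => decide_eq_decide.mpr or_comm)]

private lemma represents_prism {G : SimpleGraph V} {w : List V} (hw : Represents G w) :
    Represents (G □ (⊤ : SimpleGraph (Fin 2))) (prismWord w) := by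
  obtain ⟨hall, hiff⟩ := hw
  constructor
  · rintro ⟨c, l⟩
    refine List.mem_append.mpr (Or.inl (List.mem_append.mpr (Or.inl ?_)))
    refine List.mem_flatMap.mpr ⟨c, hall c, ?_⟩
    fin_cases l <;> simp
  · rintro ⟨x, i⟩ ⟨y, j⟩ hne
    rw [SimpleGraph.boxProd_adj, SimpleGraph.top_adj]
    by_cases hxy : x = y
    · subst hxy
      have hij : i ≠ j := fun e => hne (by rw [e])
      exact iff_of_true (Or.inr ⟨hij, rfl⟩) (same_letter_alt w x (hall x) hij)
    · have hadj : G.Adj x y ↔ Alternates x y w := hiff x y hxy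
      have hLHS : ((G.Adj x y ∧ i = j) ∨ (i ≠ j ∧ x = y)) ↔ (G.Adj x y ∧ i = j) := by
        simp [hxy]
      rw [hLHS]
      fin_cases i <;> fin_cases j
      · simpa using hadj.trans (level0_alt w x y hxy (hall x) (hall y)).symm
      · simpa using cross_not_alt w x y hxy (hall x) (hall y)
      · simpa using fun hcontra => cross_not_alt w y x (Ne.symm hxy) (hall y) (hall x)
          ((alternates_symm _ _ _).mp hcontra)
      · simpa using hadj.trans (level1_alt w x y hxy (hall x) (hall y)).symm

end Cases

theorem stmt11 [Fintype V] [DecidableEq V] (G : SimpleGraph V)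
    (h : WordRepresentable G) :
    reprLen (G □ (⊤ : SimpleGraph (Fin 2))) ≤ 2 * reprLen G + 3 * Fintype.card V - 2 := by
  classical
  have hne : {n | ∃ w : List V, Represents G w ∧ w.length = n}.Nonempty := by
    obtain ⟨w, hw⟩ := h
    exact ⟨w.length, w, hw, rfl⟩
  have hG : ∃ w : List V, Represents G w ∧ w.length = reprLen G := Nat.sInf_mem hne
  obtain ⟨w, hw, hlen⟩ := hG
  have hsinf : reprLen (G □ (⊤ : SimpleGraph (Fin 2))) ≤ (prismWord w).length :=
    Nat.sInf_le ⟨prismWord w, represents_prism hw, rfl⟩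
  have hcard : w.dedup.length = Fintype.card V := by
    have hnd := List.nodup_dedup w
    have huniv : w.dedup.toFinset = Finset.univ := by
      apply Finset.eq_univ_iff_forall.mpr
      intro v
      rw [List.mem_toFinset, List.mem_dedup]
      exact hw.1 v
    calc w.dedup.length = w.dedup.toFinset.card := (List.toFinset_card_of_nodup hnd).symm
      _ = _ := by rw [huniv, Finset.card_univ]
  have hlength : (prismWord w).length
      = 2 * w.length + w.dedup.length + 2 * (w.dedup.length - 1) := by
    rw [prismWord, List.length_append, List.length_append, length_flatMap_two,
      length_flatMap_two, List.length_map, List.length_dropLast]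
  have hwnil : w.dedup.length = 0 → w.length = 0 := by
    intro h0
    cases hcase : w with
    | nil => rfl
    | cons c t =>
      exfalso
      have hcmem : c ∈ w.dedup := List.mem_dedup.mpr (by rw [hcase]; simp)
      have := List.ne_nil_of_mem hcmem
      exact this (List.length_eq_zero_iff.mp h0)
  refine le_trans hsinf ?_
  rw [hlength, ← hlen, ← hcard]
  rcases Nat.eq_zero_or_pos w.dedup.length with h0 | h0
  · have := hwnil h0
    omega
  · omega
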